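/- Let A be a separable C*-algebra and k ≥ 0. Assume A is approximated by C*-subalgebras of generator rank at most k; that is, for every finite subset F ⊆ A and every ε > 0 there is a closed *-subalgebra B ⊆ A with gr(B) ≤ k such that every element of F is within distance ε of B. Then gr(A) ≤ k. -/

import Mathlib

set_option maxHeartbeats 1000000

open NonUnitalStarAlgebra in
lemma approx_key {B : Type*} [NonUnitalCStarAlgebra B] [NormedSpace ℂ B]
    [IsScalarTower ℂ B B] [SMulCommClass ℂ B B] [StarModule ℂ B] {K : ℕ}
    (b : Fin K → B) {y : B}
    (hy : y ∈ adjoin ℂ (Set.range b)) :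
    ∀ ε > (0:ℝ), ∃ δ > (0:ℝ), ∀ b' : Fin K → B, (∀ i, ‖b' i - b i‖ < δ) →
      ∃ y' ∈ adjoin ℂ (Set.range b'), ‖y - y'‖ < ε := by
  induction hy using NonUnitalStarAlgebra.adjoin_induction with
  | mem x hx =>
    obtain ⟨i, rfl⟩ := hx
    intro ε hε
    exact ⟨ε, hε, fun b' hb' => ⟨b' i, subset_adjoin ℂ _ ⟨i, rfl⟩, by
      simpa [norm_sub_rev] using hb' i⟩⟩
  | add x y hx hy ihx ihy =>
    intro ε hε
    obtain ⟨δ₁, hδ₁, h₁⟩ := ihx (ε/2) (by positivity)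
    obtain ⟨δ₂, hδ₂, h₂⟩ := ihy (ε/2) (by positivity)
    refine ⟨min δ₁ δ₂, lt_min hδ₁ hδ₂, fun b' hb' => ?_⟩
    obtain ⟨x', hx', hxx⟩ := h₁ b' fun i => (hb' i).trans_le (min_le_left _ _)
    obtain ⟨y', hy', hyy⟩ := h₂ b' fun i => (hb' i).trans_le (min_le_right _ _)
    refine ⟨x' + y', add_mem hx' hy', ?_⟩
    calc ‖x + y - (x' + y')‖ = ‖(x - x') + (y - y')‖ := by rw [add_sub_add_comm]
      _ ≤ ‖x - x'‖ + ‖y - y'‖ := norm_add_le _ _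
      _ < ε/2 + ε/2 := add_lt_add hxx hyy
      _ = ε := by ring
  | zero =>
    intro ε hε
    exact ⟨1, one_pos, fun b' _ => ⟨0, zero_mem _, by simpa using hε⟩⟩
  | mul x y hx hy ihx ihy =>
    intro ε hε
    obtain ⟨δ₁, hδ₁, h₁⟩ := ihx (ε / (2 * (‖y‖ + 1))) (by positivity)
    obtain ⟨δ₂, hδ₂, h₂⟩ := ihy (min 1 (ε / (2 * (‖x‖ + 1)))) (by positivity)
    refine ⟨min δ₁ δ₂, lt_min hδ₁ hδ₂, fun b' hb' => ?_⟩
    obtain ⟨x', hx', hxx⟩ := h₁ b' fun i => (hb' i).trans_le (min_le_left _ _)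
    obtain ⟨y', hy', hyy⟩ := h₂ b' fun i => (hb' i).trans_le (min_le_right _ _)
    refine ⟨x' * y', mul_mem hx' hy', ?_⟩
    have hy'le : ‖y'‖ ≤ ‖y‖ + 1 := by
      have h3 : ‖y - y'‖ < 1 := hyy.trans_le (min_le_left _ _)
      have h4 : ‖y'‖ - ‖y‖ ≤ ‖y - y'‖ := (norm_sub_norm_le y' y).trans_eq (norm_sub_rev y' y)
      linarith
    have key : x * y - x' * y' = (x - x') * y' + x * (y - y') := by noncomm_ring
    have h1 : ‖(x - x') * y'‖ ≤ ‖x - x'‖ * ‖y'‖ := norm_mul_le _ _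
    have h2 : ‖x * (y - y')‖ ≤ ‖x‖ * ‖y - y'‖ := norm_mul_le _ _
    have hxx' : ‖x - x'‖ * (2 * (‖y‖ + 1)) < ε := by
      rw [← lt_div_iff₀ (by positivity)]; exact hxx
    have hyy' : ‖y - y'‖ * (2 * (‖x‖ + 1)) < ε := by
      rw [← lt_div_iff₀ (by positivity)]
      exact hyy.trans_le (min_le_right _ _)
    calc ‖x * y - x' * y'‖ ≤ ‖(x - x') * y'‖ + ‖x * (y - y')‖ := by
          rw [key]; exact norm_add_le _ _
      _ < ε := by
          nlinarith [norm_nonneg (x - x'), norm_nonneg (y - y'), norm_nonneg x,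
            norm_nonneg y', norm_nonneg y]
  | smul r x hx ihx =>
    intro ε hε
    obtain ⟨δ, hδ, h⟩ := ihx (ε / (‖r‖ + 1)) (by positivity)
    refine ⟨δ, hδ, fun b' hb' => ?_⟩
    obtain ⟨x', hx', hxx⟩ := h b' hb'
    refine ⟨r • x', SMulMemClass.smul_mem r hx', ?_⟩
    rw [← smul_sub, norm_smul]
    calc ‖r‖ * ‖x - x'‖ ≤ ‖r‖ * (ε / (‖r‖ + 1)) :=
          mul_le_mul_of_nonneg_left hxx.le (norm_nonneg r)
      _ < ε := by
          rw [mul_div_assoc']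
          rw [div_lt_iff₀ (by positivity)]
          nlinarith [norm_nonneg r]
  | star x hx ihx =>
    intro ε hε
    obtain ⟨δ, hδ, h⟩ := ihx ε hε
    refine ⟨δ, hδ, fun b' hb' => ?_⟩
    obtain ⟨x', hx', hxx⟩ := h b' hb'
    exact ⟨star x', star_mem hx', by rwa [← star_sub, norm_star]⟩

open NonUnitalStarAlgebra in
lemma isOpen_approxSet {B : Type*} [NonUnitalCStarAlgebra B] {K : ℕ} (x : B) (ε : ℝ) :
    IsOpen {b : Fin K → B | ∃ y ∈ adjoin ℂ (Set.range b), ‖x - y‖ < ε} := by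
  rw [Metric.isOpen_iff]
  rintro b ⟨y, hy, hxy⟩
  obtain ⟨δ, hδ, h⟩ := approx_key b hy (ε - ‖x - y‖) (by linarith)
  refine ⟨δ, hδ, fun b' hb' => ?_⟩
  have hcoord : ∀ i, ‖b' i - b i‖ < δ := fun i => by
    calc ‖b' i - b i‖ = dist (b' i) (b i) := (dist_eq_norm _ _).symm
      _ ≤ dist b' b := dist_le_pi_dist b' b i
      _ < δ := Metric.mem_ball.mp hb'
  obtain ⟨y', hy', hyy⟩ := h b' hcoord
  refine ⟨y', hy', ?_⟩
  have : x - y' = (x - y) + (y - y') := by abel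
  calc ‖x - y'‖ ≤ ‖x - y‖ + ‖y - y'‖ := by rw [this]; exact norm_add_le _ _
    _ < ε := by linarith

open NonUnitalStarAlgebra Unitization in
lemma dense_approx {A : Type*} [NonUnitalCStarAlgebra A] (k : ℕ)
    (happrox : ∀ (F : Finset A) (ε : ℝ), 0 < ε →
      ∃ (S : NonUnitalStarSubalgebra ℂ A) (hSc : IsClosed (S : Set A)),
        (∀ x ∈ F, ∃ y ∈ S, ‖x - y‖ < ε) ∧
        (letI := hSc;
          ∀ a : Fin (k + 1) → Unitization ℂ S, (∀ i, IsSelfAdjoint (a i)) →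
            a ∈ closure {b : Fin (k + 1) → Unitization ℂ S | (∀ i, IsSelfAdjoint (b i)) ∧
              (adjoin ℂ (Set.range b)).topologicalClosure = ⊤}))
    (x : Unitization ℂ A) {ε : ℝ} (hε : 0 < ε)
    (a : Fin (k+1) → Unitization ℂ A) (ha : ∀ i, IsSelfAdjoint (a i)) {ε' : ℝ} (hε' : 0 < ε') :
    ∃ b : Fin (k+1) → Unitization ℂ A, (∀ i, IsSelfAdjoint (b i)) ∧ (∀ i, ‖b i - a i‖ < ε') ∧
      ∃ y ∈ adjoin ℂ (Set.range b), ‖x - y‖ < ε := by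
  classical
  set δ := min ε ε' / 2 with hδdef
  have hδ : 0 < δ := by positivity
  have hδε : δ < ε := by
    have : min ε ε' ≤ ε := min_le_left _ _
    simp only [hδdef]; linarith
  obtain ⟨S, hSc, hF, hGr⟩ :=
    happrox (insert x.snd (Finset.image (fun i => (a i).snd) Finset.univ)) δ hδ
  letI := hSc
  -- selfadjoint approximants in S for the components of a
  have hz : ∀ i, ∃ z : S, IsSelfAdjoint z ∧ ‖(a i).snd - (z : A)‖ < δ := by
    intro i
    obtain ⟨y, hyS, hy⟩ := hF (a i).snd (by simp [Finset.mem_insert])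
    refine ⟨(2⁻¹ : ℂ) • (⟨y, hyS⟩ + star (⟨y, hyS⟩ : S)), ?_, ?_⟩
    · rw [IsSelfAdjoint, star_smul, star_add, star_star, add_comm]
      congr 1
      simp [RCLike.star_def]
    · have hsa : star (a i).snd = (a i).snd := by
        have := congrArg (fun x : Unitization ℂ A => x.snd) (ha i)
        simpa [Unitization.snd_star] using this
      have hval : (((2⁻¹ : ℂ) • (⟨y, hyS⟩ + star (⟨y, hyS⟩ : S)) : S) : A)
          = (2⁻¹ : ℂ) • (y + star y) := by
        simp
      rw [hval]
      have key : (a i).snd - (2⁻¹ : ℂ) • (y + star y)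
          = (2⁻¹ : ℂ) • (((a i).snd - y) + star ((a i).snd - y)) := by
        rw [star_sub, hsa]
        module
      rw [key]
      calc ‖(2⁻¹ : ℂ) • (((a i).snd - y) + star ((a i).snd - y))‖
          ≤ ‖(2⁻¹ : ℂ)‖ * (‖(a i).snd - y‖ + ‖star ((a i).snd - y)‖) := by
            rw [norm_smul]
            exact mul_le_mul_of_nonneg_left (norm_add_le _ _) (norm_nonneg _)
        _ = ‖(a i).snd - y‖ := by rw [norm_star]; simp; ring
        _ < δ := hy
  choose z hzsa hzlt using hz
  obtain ⟨w, hwS, hw⟩ := hF x.snd (Finset.mem_insert_self _ _)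
  -- the approximating tuple inside the unitization of S
  set a' : Fin (k+1) → Unitization ℂ S := fun i => inl (a i).fst + inr (z i) with ha'def
  have ha'sa : ∀ i, IsSelfAdjoint (a' i) := by
    intro i
    have hfst : star (a i).fst = (a i).fst := by
      have := congrArg (fun x : Unitization ℂ A => x.fst) (ha i)
      simpa [Unitization.fst_star] using this
    rw [IsSelfAdjoint, ha'def]
    simp only [star_add, ← inl_star, ← inr_star, hfst, (hzsa i).star_eq]
  -- a selfadjoint generating tuple for Unitization ℂ S near a'
  have := hGr a' ha'sa
  rw [Metric.mem_closure_iff] at this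
  obtain ⟨b', ⟨hb'sa, hb'gen⟩, hb'dist⟩ := this δ hδ
  -- push everything into Unitization ℂ A
  set ι : Unitization ℂ S →⋆ₐ[ℂ] Unitization ℂ A :=
    starMap (NonUnitalStarSubalgebraClass.subtype S) with hιdef
  have hinj : Function.Injective ι := starMap_injective Subtype.val_injective
  have hiso : Isometry ι := NonUnitalStarAlgHom.isometry ι hinj
  set b : Fin (k+1) → Unitization ℂ A := fun i => ι (b' i) with hbdef
  have hιa' : ∀ i, ι (a' i) = inl (a i).fst + inr (z i : A) := by
    intro i
    show starMap _ (inl (a i).fst + inr (z i)) = _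
    rw [map_add, starMap_inr, starMap_inl, Unitization.algebraMap_eq_inl]
    rfl
  refine ⟨b, fun i => (hb'sa i).map ι, fun i => ?_, ?_⟩
  · have h1 : ‖ι (b' i) - ι (a' i)‖ = ‖b' i - a' i‖ := by
      rw [← map_sub]
      exact hiso.norm_map_of_map_zero (map_zero ι) _
    have h2 : ι (a' i) - a i = inr ((z i : A) - (a i).snd) := by
      refine Unitization.ext ?_ ?_
      · simp [hιa' i, sub_eq_add_neg]
      · simp [hιa' i, sub_eq_add_neg]
    have h3 : ‖ι (a' i) - a i‖ < δ := by
      rw [h2, norm_inr, norm_sub_rev]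
      exact hzlt i
    have h4 : ‖b' i - a' i‖ < δ := by
      calc ‖b' i - a' i‖ = dist (b' i) (a' i) := (dist_eq_norm _ _).symm
        _ ≤ dist b' a' := dist_le_pi_dist b' a' i
        _ < δ := by rw [dist_comm]; exact hb'dist
    calc ‖b i - a i‖ = ‖(ι (b' i) - ι (a' i)) + (ι (a' i) - a i)‖ := by
          rw [hbdef]; congr 1; abel
      _ ≤ ‖ι (b' i) - ι (a' i)‖ + ‖ι (a' i) - a i‖ := norm_add_le _ _
      _ < δ + δ := by rw [h1]; exact add_lt_add h4 h3
      _ ≤ ε' := by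
          have : min ε ε' ≤ ε' := min_le_right _ _
          simp only [hδdef]; linarith
  · -- generation: the closure of the algebra generated by b is the range of ι
    have hadj : (↑(adjoin ℂ (Set.range b)) : Set (Unitization ℂ A))
        = ι '' (adjoin ℂ (Set.range b')) := by
      have hrng : Set.range b = ι '' Set.range b' := Set.range_comp ι b'
      rw [hrng, ← NonUnitalStarAlgHom.map_adjoin]
      rfl
    have hclos : closure (↑(adjoin ℂ (Set.range b)) : Set (Unitization ℂ A)) = Set.range ι := by
      rw [hadj, (hiso.isClosedEmbedding).closure_image_eq]
      have h5 : closure (↑(adjoin ℂ (Set.range b')) : Set (Unitization ℂ S)) = Set.univ := by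
        calc closure (↑(adjoin ℂ (Set.range b')) : Set (Unitization ℂ S))
            = ((adjoin ℂ (Set.range b')).topologicalClosure : Set (Unitization ℂ S)) := rfl
          _ = ((⊤ : NonUnitalStarSubalgebra ℂ (Unitization ℂ S)) : Set (Unitization ℂ S)) := by
              rw [hb'gen]
          _ = Set.univ := rfl
      rw [h5, Set.image_univ]
    have hιw : ι (inl x.fst + inr (⟨w, hwS⟩ : S)) = (inl x.fst + inr w : Unitization ℂ A) := by
      show starMap _ (inl x.fst + inr (⟨w, hwS⟩ : S)) = _
      rw [map_add, starMap_inr, starMap_inl, Unitization.algebraMap_eq_inl]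
      rfl
    have hyhat : (inl x.fst + inr w : Unitization ℂ A) ∈
        closure (↑(adjoin ℂ (Set.range b)) : Set (Unitization ℂ A)) := by
      rw [hclos, ← hιw]
      exact Set.mem_range_self _
    rw [Metric.mem_closure_iff] at hyhat
    obtain ⟨y, hymem, hydist⟩ := hyhat (ε - δ) (by linarith)
    refine ⟨y, hymem, ?_⟩
    have hxw : ‖x - (inl x.fst + inr w : Unitization ℂ A)‖ < δ := by
      have hxsub : x - (inl x.fst + inr w : Unitization ℂ A) = inr (x.snd - w) := by
        refine Unitization.ext ?_ ?_
        · simp [sub_eq_add_neg]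
        · simp [sub_eq_add_neg]
      rw [hxsub, norm_inr]
      exact hw
    calc ‖x - y‖ ≤ ‖x - (inl x.fst + inr w : Unitization ℂ A)‖
          + ‖(inl x.fst + inr w : Unitization ℂ A) - y‖ := by
          have : x - y = (x - (inl x.fst + inr w : Unitization ℂ A))
              + ((inl x.fst + inr w : Unitization ℂ A) - y) := by abel
          rw [this]; exact norm_add_le _ _
      _ < δ + (ε - δ) := by
          refine add_lt_add hxw ?_
          rw [← dist_eq_norm]; exact hydist
      _ = ε := by ring

open NonUnitalStarAlgebra

/-- The entries of the tuple `a` generate `A` as a C*-algebra: the smallest closed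
`*`-subalgebra of `A` containing them is `A` itself. -/
def Generates {A : Type*} [NonUnitalCStarAlgebra A] {k : ℕ} (a : Fin k → A) : Prop :=
  (NonUnitalStarAlgebra.adjoin ℂ (Set.range a)).topologicalClosure = ⊤

/-- `gr(A) ≤ k`: the set `Gen_{k+1}(Ã)_sa` is dense in `Ã^{k+1}_sa`, where `Ã`
is the minimal unitization of `A`. -/
def GrLE (A : Type*) [NonUnitalCStarAlgebra A] (k : ℕ) : Prop :=
  ∀ a : Fin (k + 1) → Unitization ℂ A, (∀ i, IsSelfAdjoint (a i)) →
    a ∈ closure {b : Fin (k + 1) → Unitization ℂ A | (∀ i, IsSelfAdjoint (b i)) ∧ Generates b}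

/-- If a separable C*-algebra `A` is approximated by closed `*`-subalgebras of
generator rank at most `k`, then `gr(A) ≤ k`. -/
theorem gr_le_of_approx {A : Type*} [NonUnitalCStarAlgebra A]
    [TopologicalSpace.SeparableSpace A] (k : ℕ)
    (happrox : ∀ (F : Finset A) (ε : ℝ), 0 < ε →
      ∃ (S : NonUnitalStarSubalgebra ℂ A) (hSc : IsClosed (S : Set A)),
        (∀ x ∈ F, ∃ y ∈ S, ‖x - y‖ < ε) ∧
        (letI := hSc; GrLE S k)) :
    GrLE A k := by
  classical
  have hsep : TopologicalSpace.SeparableSpace (Unitization ℂ A) := by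
    have hsurj : Function.Surjective
        ((Unitization.uniformEquivProd (𝕜 := ℂ) (A := A)).symm : ℂ × A → Unitization ℂ A) :=
      (Unitization.uniformEquivProd (𝕜 := ℂ) (A := A)).symm.surjective
    exact hsurj.denseRange.separableSpace
      (Unitization.uniformEquivProd (𝕜 := ℂ) (A := A)).symm.continuous
  obtain ⟨u, hu⟩ := TopologicalSpace.exists_dense_seq (Unitization ℂ A)
  set T : Set (Fin (k+1) → Unitization ℂ A) := {b | ∀ i, IsSelfAdjoint (b i)} with hTdef
  have hTclosed : IsClosed T := by
    have : T = ⋂ i, {b : Fin (k+1) → Unitization ℂ A | star (b i) = b i} := by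
      ext b; simp [hTdef, Set.mem_iInter, IsSelfAdjoint]
    rw [this]
    exact isClosed_iInter fun i =>
      isClosed_eq (continuous_star.comp (continuous_apply i)) (continuous_apply i)
  letI : CompleteSpace T := hTclosed.completeSpace_coe
  set V : ℕ × ℕ → Set T := fun p =>
    {b : T | ∃ y ∈ adjoin ℂ (Set.range (b : Fin (k+1) → Unitization ℂ A)),
      ‖u p.1 - y‖ < 1/((p.2 : ℝ)+1)} with hVdef
  have hVopen : ∀ p, IsOpen (V p) := fun p =>
    (isOpen_approxSet (u p.1) (1/((p.2 : ℝ)+1))).preimage continuous_subtype_val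
  have hVdense : ∀ p, Dense (V p) := by
    intro p
    rw [Metric.dense_iff]
    intro t r hr
    obtain ⟨b, hbsa, hbdist, hby⟩ := dense_approx k happrox (u p.1)
      (show (0:ℝ) < 1/((p.2 : ℝ)+1) by positivity) (t : Fin (k+1) → Unitization ℂ A) t.2 hr
    refine ⟨⟨b, hbsa⟩, ?_, hby⟩
    rw [Metric.mem_ball, Subtype.dist_eq, dist_pi_lt_iff hr]
    intro i
    rw [dist_eq_norm]
    exact hbdist i
  have hGδ : Dense (⋂ p, V p) := dense_iInter_of_isOpen hVopen hVdense
  intro a ha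
  rw [Metric.mem_closure_iff]
  intro r hr
  rw [Metric.dense_iff] at hGδ
  obtain ⟨t, htball, htV⟩ := hGδ ⟨a, ha⟩ r hr
  refine ⟨(t : Fin (k+1) → Unitization ℂ A), ⟨t.2, ?_⟩, ?_⟩
  · -- Generates
    have hmem : ∀ n : ℕ, u n ∈
        closure (↑(adjoin ℂ (Set.range (t : Fin (k+1) → Unitization ℂ A)))
          : Set (Unitization ℂ A)) := by
      intro n
      rw [Metric.mem_closure_iff]
      intro ε hε
      obtain ⟨m, hm⟩ := exists_nat_one_div_lt hε
      obtain ⟨y, hy, hlt⟩ := Set.mem_iInter.mp htV (n, m)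
      exact ⟨y, hy, by rw [dist_eq_norm]; exact hlt.trans hm⟩
    have hdense : closure (↑(adjoin ℂ (Set.range (t : Fin (k+1) → Unitization ℂ A)))
        : Set (Unitization ℂ A)) = Set.univ := by
      have h1 : Set.range u ⊆ closure
          (↑(adjoin ℂ (Set.range (t : Fin (k+1) → Unitization ℂ A)))
            : Set (Unitization ℂ A)) := Set.range_subset_iff.mpr hmem
      have h2 := closure_mono h1
      rw [closure_closure] at h2
      exact Set.eq_univ_of_univ_subset (hu.closure_range ▸ h2)
    refine SetLike.coe_injective ?_
    show closure (↑(adjoin ℂ (Set.range (t : Fin (k+1) → Unitization ℂ A)))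
        : Set (Unitization ℂ A)) = Set.univ
    exact hdense
  · rw [Metric.mem_ball, Subtype.dist_eq] at htball
    rw [dist_comm]
    exact htball
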